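/- Replacing a multiple edge by a single edge does not change the homology of the complex of connected subgraphs: if e and e′ are two distinct edges of a connected multigraph Γ with the same (unordered) pair of endpoints, then H_i(C_conn(Γ)) ≅ H_i(C_conn(Γ∖e)) for every i, where Γ∖e denotes the multigraph obtained from Γ by deleting the edge e. -/

import Mathlib

/-!
Statement 11. Replacing a multiple edge by a single edge does not change the homology of
the complex of connected subgraphs: if `e` and `e'` are distinct edges of a connected
multigraph `Γ` with the same endpoints, then `H_i(C_conn(Γ)) ≅ H_i(C_conn(Γ∖e))` for every
`i`, where `Γ∖e` is obtained from `Γ` by deleting the edge `e`.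
-/

noncomputable section

open scoped Classical

variable {V E : Type}

/-- One step of a walk: `x` and `y` are joined by an edge of `S`. -/
def StepRel (ends : E → Sym2 V) (S : Finset E) (x y : V) : Prop :=
  ∃ e ∈ S, ends e = s(x, y)

/-- The spanning subgraph `(V, S)` is connected. -/
def IsConn (ends : E → Sym2 V) (S : Finset E) : Prop :=
  ∀ a b : V, Relation.ReflTransGen (StepRel ends S) a b

/-- Connected spanning subgraphs with `i` edges: the basis of `C_conn(Γ)_i`. -/
def ConnSub (ends : E → Sym2 V) (i : ℕ) : Type _ :=
  {S : Finset E // S.card = i ∧ IsConn ends S}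

/-- The degree-`i` chain group of the complex of connected subgraphs. -/
abbrev CConn (ends : E → Sym2 V) (i : ℕ) : Type _ :=
  ConnSub ends i →₀ ℤ

/-- `ν(e, S)`: the number of edges of `S` strictly preceding `e`. -/
def nuEdge [LinearOrder E] (e : E) (S : Finset E) : ℕ :=
  (S.filter fun f => f < e).card

/-- The differential of `C_conn(Γ)`:
`d(S) = Σ (−1)^{ν(e,S)} (S∖{e})`, the sum over those `e ∈ S` whose removal keeps `(V, S∖{e})`
connected. -/
noncomputable def bdry [DecidableEq E] [LinearOrder E] (ends : E → Sym2 V) (i : ℕ) :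
    CConn ends (i + 1) →ₗ[ℤ] CConn ends i :=
  Finsupp.lsum ℤ fun S : ConnSub ends (i + 1) =>
    LinearMap.toSpanSingleton ℤ (CConn ends i)
      (∑ e ∈ S.1.attach,
        if h : IsConn ends (S.1.erase e.1) then
          ((-1 : ℤ) ^ nuEdge e.1 S.1) •
            Finsupp.single
              (⟨S.1.erase e.1, by simp [Finset.card_erase_of_mem e.2, S.2.1], h⟩ :
                ConnSub ends i) 1
        else 0)

/-- `H_0` of the complex of connected subgraphs. -/
abbrev ConnH0 [DecidableEq E] [LinearOrder E] (ends : E → Sym2 V) : Type _ :=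
  CConn ends 0 ⧸ LinearMap.range (bdry ends 0)

/-- `H_{i+1}` of the complex of connected subgraphs. -/
abbrev ConnH [DecidableEq E] [LinearOrder E] (ends : E → Sym2 V) (i : ℕ) : Type _ :=
  ↥(LinearMap.ker (bdry ends i)) ⧸
    Submodule.comap (LinearMap.ker (bdry ends i)).subtype
      (LinearMap.range (bdry ends (i + 1)))


attribute [reducible] ConnSub

/-! ### Auxiliary development -/

section Aux

variable {V E : Type}

-- Basic facts about `StepRel` and `IsConn`.

lemma stepRel_mono {ends : E → Sym2 V} {S T : Finset E} (h : S ⊆ T) {x y : V}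
    (hs : StepRel ends S x y) : StepRel ends T x y := by
  obtain ⟨f, hf, hf2⟩ := hs; exact ⟨f, h hf, hf2⟩

lemma isConn_mono {ends : E → Sym2 V} {S T : Finset E} (h : S ⊆ T)
    (hs : IsConn ends S) : IsConn ends T := fun a b =>
  Relation.ReflTransGen.mono (fun _ _ => stepRel_mono h) _ _ (hs a b)

/-- Removing an edge parallel to another edge of `S` does not change `StepRel`. -/
lemma stepRel_erase_parallel {ends : E → Sym2 V} [DecidableEq E] {a b : E} {S : Finset E}
    (hpar : ends a = ends b) (ha : a ∈ S) (hab : a ≠ b) (x y : V) :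
    StepRel ends (S.erase b) x y ↔ StepRel ends S x y := by
  constructor
  · exact stepRel_mono (Finset.erase_subset _ _)
  · rintro ⟨f, hf, hf2⟩
    by_cases hfb : f = b
    · exact ⟨a, Finset.mem_erase.2 ⟨hab, ha⟩, by rw [hpar, ← hfb, hf2]⟩
    · exact ⟨f, Finset.mem_erase.2 ⟨hfb, hf⟩, hf2⟩

/-- Removing an edge parallel to another edge of `S` does not change connectivity. -/
lemma isConn_erase_parallel {ends : E → Sym2 V} [DecidableEq E] {a b : E} {S : Finset E}
    (hpar : ends a = ends b) (ha : a ∈ S) (hab : a ≠ b) :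
    IsConn ends (S.erase b) ↔ IsConn ends S := by
  unfold IsConn
  have h := fun x y => stepRel_erase_parallel (S := S) hpar ha hab x y
  constructor <;> intro hc x y <;> refine Relation.ReflTransGen.mono (fun u v huv => ?_) _ _ (hc x y)
  · exact (h u v).1 huv
  · exact (h u v).2 huv

end Aux

section UpDown

set_option linter.unusedSectionVars false

variable {V E : Type} [Fintype E] {e : E}

/-- Push a finset of edges of `Γ∖e` up to `Γ`. -/
def upF (e : E) (S' : Finset {f : E // f ≠ e}) : Finset E :=
  S'.map (Function.Embedding.subtype _)

/-- Pull a finset of edges of `Γ` not containing `e` down to `Γ∖e`. -/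
def downF (e : E) (S : Finset E) [DecidableEq E] : Finset {f : E // f ≠ e} :=
  S.subtype _

variable [DecidableEq E]

@[simp] lemma mem_upF {S' : Finset {f : E // f ≠ e}} {f : E} :
    f ∈ upF e S' ↔ ∃ h : f ≠ e, ⟨f, h⟩ ∈ S' := by
  simp only [upF, Finset.mem_map, Function.Embedding.coe_subtype]
  constructor
  · rintro ⟨a, ha, rfl⟩; exact ⟨a.2, ha⟩
  · rintro ⟨h, hm⟩; exact ⟨⟨f, h⟩, hm, rfl⟩

@[simp] lemma mem_downF {S : Finset E} {f : {f : E // f ≠ e}} :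
    f ∈ downF e S ↔ f.1 ∈ S := Finset.mem_subtype

@[simp] lemma e_not_mem_upF {S' : Finset {f : E // f ≠ e}} : e ∉ upF e S' := by
  simp

@[simp] lemma downF_upF (S' : Finset {f : E // f ≠ e}) : downF e (upF e S') = S' := by
  ext f; simp [f.2]

lemma upF_downF {S : Finset E} (he : e ∉ S) : upF e (downF e S) = S := by
  ext f
  simp only [mem_upF, mem_downF]
  constructor
  · rintro ⟨h, hm⟩; exact hm
  · intro hf; exact ⟨fun hfe => he (hfe ▸ hf), hf⟩

@[simp] lemma card_upF (S' : Finset {f : E // f ≠ e}) : (upF e S').card = S'.card :=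
  Finset.card_map _

lemma card_downF {S : Finset E} (he : e ∉ S) : (downF e S).card = S.card := by
  rw [← card_upF (e := e) (downF e S), upF_downF he]

lemma upF_erase (S' : Finset {f : E // f ≠ e}) (f : {f : E // f ≠ e}) :
    upF e (S'.erase f) = (upF e S').erase f.1 := by
  ext g
  simp only [mem_upF, Finset.mem_erase]
  constructor
  · rintro ⟨h, hg, hm⟩
    exact ⟨fun hgf => hg (by ext; exact hgf ▸ rfl), h, hm⟩
  · rintro ⟨hg, h, hm⟩
    exact ⟨h, fun hc => hg (congrArg Subtype.val hc), hm⟩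

lemma downF_erase (S : Finset E) (f : {f : E // f ≠ e}) :
    downF e (S.erase f.1) = (downF e S).erase f := by
  ext g
  simp only [mem_downF, Finset.mem_erase]
  constructor
  · rintro ⟨hg, hm⟩
    exact ⟨fun hc => hg (congrArg Subtype.val hc), hm⟩
  · rintro ⟨hg, hm⟩
    exact ⟨fun hc => hg (by ext; exact hc), hm⟩

variable {ends : E → Sym2 V}

lemma stepRel_upF (S' : Finset {f : E // f ≠ e}) (x y : V) :
    StepRel (fun f : {f : E // f ≠ e} => ends f.1) S' x y ↔ StepRel ends (upF e S') x y := by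
  constructor
  · rintro ⟨f, hf, hf2⟩; exact ⟨f.1, by simp [f.2, hf], hf2⟩
  · rintro ⟨f, hf, hf2⟩
    rw [mem_upF] at hf
    obtain ⟨h, hm⟩ := hf
    exact ⟨⟨f, h⟩, hm, hf2⟩

lemma isConn_upF {S' : Finset {f : E // f ≠ e}} :
    IsConn (fun f : {f : E // f ≠ e} => ends f.1) S' ↔ IsConn ends (upF e S') := by
  unfold IsConn
  constructor <;> intro hc x y <;> refine Relation.ReflTransGen.mono (fun u v huv => ?_) _ _ (hc x y)
  · exact (stepRel_upF S' u v).1 huv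
  · exact (stepRel_upF S' u v).2 huv

end UpDown

section Nu

variable {E : Type} [LinearOrder E]

lemma nuEdge_erase_of_lt {S : Finset E} {g f : E} (hg : g ∈ S) (h : g < f) :
    nuEdge f S = nuEdge f (S.erase g) + 1 := by
  classical
  unfold nuEdge
  have : S.filter (fun x => x < f) = insert g ((S.erase g).filter (fun x => x < f)) := by
    ext x
    simp only [Finset.mem_filter, Finset.mem_insert, Finset.mem_erase]
    constructor
    · rintro ⟨hx, hxf⟩
      by_cases hxg : x = g
      · exact Or.inl hxg
      · exact Or.inr ⟨⟨hxg, hx⟩, hxf⟩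
    · rintro (rfl | ⟨⟨_, hx⟩, hxf⟩)
      · exact ⟨hg, h⟩
      · exact ⟨hx, hxf⟩
  rw [this, Finset.card_insert_of_notMem (by simp)]

end Nu

section Nu2

variable {E : Type} [LinearOrder E]

lemma filter_lt_erase (S : Finset E) (g f : E) :
    ((S.erase g).filter (fun x => x < f)) = (S.filter (fun x => x < f)).erase g := by
  classical
  ext x
  simp only [Finset.mem_filter, Finset.mem_erase]
  tauto

lemma nuEdge_erase_of_not_lt {S : Finset E} {g f : E} (h : ¬ g < f) :
    nuEdge f (S.erase g) = nuEdge f S := by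
  classical
  unfold nuEdge
  rw [filter_lt_erase, Finset.erase_eq_of_notMem (by simp [h])]

lemma nuEdge_insert_of_lt {S : Finset E} {g f : E} (hg : g ∉ S) (h : g < f) :
    nuEdge f (insert g S) = nuEdge f S + 1 := by
  classical
  unfold nuEdge
  rw [Finset.filter_insert, if_pos h, Finset.card_insert_of_notMem (by simp [hg])]

lemma nuEdge_insert_of_not_lt {S : Finset E} {g f : E} (h : ¬ g < f) :
    nuEdge f (insert g S) = nuEdge f S := by
  classical
  unfold nuEdge
  rw [Finset.filter_insert, if_neg h]

lemma neg_one_pow_eq_of_mod {a b : ℕ} (h : a % 2 = b % 2) : ((-1:ℤ))^a = (-1)^b := by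
  conv_lhs => rw [← Nat.div_add_mod a 2]
  conv_rhs => rw [← Nat.div_add_mod b 2]
  rw [pow_add, pow_add, pow_mul, pow_mul]
  norm_num [h]

lemma neg_one_pow_ne_of_mod {a b : ℕ} (h : a % 2 ≠ b % 2) : ((-1:ℤ))^a = -(-1)^b := by
  have : a % 2 = (b+1) % 2 := by omega
  rw [neg_one_pow_eq_of_mod this, pow_succ]
  ring

end Nu2

section Nu3

variable {E : Type} [Fintype E] [LinearOrder E] {e : E}

lemma nuEdge_upF (S' : Finset {f : E // f ≠ e}) (f : {f : E // f ≠ e}) :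
    nuEdge f S' = nuEdge f.1 (upF e S') := by
  classical
  unfold nuEdge
  rw [← card_upF (e := e)]
  congr 1
  ext g
  simp only [mem_upF, Finset.mem_filter]
  constructor
  · rintro ⟨h, hg, hlt⟩
    exact ⟨⟨h, hg⟩, hlt⟩
  · rintro ⟨⟨h, hg⟩, hlt⟩
    exact ⟨h, hg, hlt⟩

end Nu3

section SumHelp

variable {E : Type} [Fintype E] [DecidableEq E] {M : Type} [AddCommMonoid M]

open Finset in
lemma sum_univ_subtype_ne (e : E) (t : E → M) (ht : t e = 0) :
    ∑ f : {f : E // f ≠ e}, t f.1 = ∑ f : E, t f := by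
  rw [← Finset.sum_subtype (Finset.univ.erase e) (fun x => by simp [Finset.mem_erase]) t]
  rw [← Finset.add_sum_erase _ t (Finset.mem_univ e), ht, zero_add]

open Finset in
lemma sum_univ_split (e e' : E) (hne : e ≠ e') (t : E → M) :
    ∑ f : E, t f = t e + t e' + ∑ f ∈ (Finset.univ.erase e).erase e', t f := by
  rw [← Finset.add_sum_erase _ t (Finset.mem_univ e), ← Finset.add_sum_erase _ t
    (Finset.mem_erase.2 ⟨Ne.symm hne, Finset.mem_univ e'⟩), add_assoc]

end SumHelp

section QuotEquiv

variable {M N : Type} [AddCommGroup M] [AddCommGroup N] [Module ℤ M] [Module ℤ N]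

lemma quotEquivOfMaps (p : Submodule ℤ M) (q : Submodule ℤ N) (f : M →ₗ[ℤ] N) (g : N →ₗ[ℤ] M)
    (hf : ∀ x ∈ p, f x ∈ q) (hg : ∀ y ∈ q, g y ∈ p)
    (hfg : ∀ y, f (g y) = y) (hgf : ∀ x, g (f x) - x ∈ p) :
    Nonempty ((M ⧸ p) ≃ₗ[ℤ] (N ⧸ q)) := by
  have hp : ∀ x ∈ p.toAddSubgroup,
      x ∈ ((QuotientAddGroup.mk' q.toAddSubgroup).comp f.toAddMonoidHom).ker := by
    intro x hx
    simp only [AddMonoidHom.mem_ker, AddMonoidHom.comp_apply, LinearMap.toAddMonoidHom_coe,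
      QuotientAddGroup.mk'_apply, QuotientAddGroup.eq_zero_iff]
    exact hf x hx
  have hq : ∀ y ∈ q.toAddSubgroup,
      y ∈ ((QuotientAddGroup.mk' p.toAddSubgroup).comp g.toAddMonoidHom).ker := by
    intro y hy
    simp only [AddMonoidHom.mem_ker, AddMonoidHom.comp_apply, LinearMap.toAddMonoidHom_coe,
      QuotientAddGroup.mk'_apply, QuotientAddGroup.eq_zero_iff]
    exact hg y hy
  refine ⟨AddEquiv.toIntLinearEquiv ?_⟩
  refine
    { toFun := QuotientAddGroup.lift p.toAddSubgroup
        ((QuotientAddGroup.mk' q.toAddSubgroup).comp f.toAddMonoidHom) hp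
      invFun := QuotientAddGroup.lift q.toAddSubgroup
        ((QuotientAddGroup.mk' p.toAddSubgroup).comp g.toAddMonoidHom) hq
      left_inv := ?_
      right_inv := ?_
      map_add' := map_add _ }
  · intro z
    induction z using Quotient.inductionOn with
    | h x =>
      show QuotientAddGroup.lift _ _ hq (QuotientAddGroup.lift _ _ hp
        (QuotientAddGroup.mk x)) = QuotientAddGroup.mk x
      rw [QuotientAddGroup.lift_mk']
      show QuotientAddGroup.lift _ _ hq (QuotientAddGroup.mk (f x)) = _
      rw [QuotientAddGroup.lift_mk']
      show QuotientAddGroup.mk (g (f x)) = QuotientAddGroup.mk x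
      rw [QuotientAddGroup.eq]
      have h := neg_mem (hgf x)
      rwa [neg_sub, sub_eq_neg_add] at h
  · intro z
    induction z using Quotient.inductionOn with
    | h y =>
      show QuotientAddGroup.lift _ _ hp (QuotientAddGroup.lift _ _ hq
        (QuotientAddGroup.mk y)) = QuotientAddGroup.mk y
      rw [QuotientAddGroup.lift_mk']
      show QuotientAddGroup.lift _ _ hp (QuotientAddGroup.mk (g y)) = _
      rw [QuotientAddGroup.lift_mk']
      show QuotientAddGroup.mk (f (g y)) = QuotientAddGroup.mk y
      rw [hfg y]

end QuotEquiv

section BdrySingle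

set_option linter.unusedSectionVars false

variable {V E : Type} [Fintype V] [DecidableEq V] [Fintype E] [LinearOrder E] [DecidableEq E]
  (ends : E → Sym2 V)

lemma lhom_ext_one {M ι : Type} [AddCommGroup M] [Module ℤ M] {f g : (ι →₀ ℤ) →ₗ[ℤ] M}
    (h : ∀ a, f (Finsupp.single a 1) = g (Finsupp.single a 1)) : f = g := by
  refine Finsupp.lhom_ext fun a b => ?_
  have hb : Finsupp.single a b = b • Finsupp.single a (1 : ℤ) := by
    rw [Finsupp.smul_single, smul_eq_mul, mul_one]
  rw [hb, LinearMap.map_smul, LinearMap.map_smul, h]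

lemma lsum_span_single {M ι : Type} [AddCommGroup M] (v : ι → M) (a : ι) :
    (Finsupp.lsum ℤ fun x : ι => LinearMap.toSpanSingleton ℤ M (v x))
      (Finsupp.single a 1) = v a := by
  rw [Finsupp.lsum_single, LinearMap.toSpanSingleton_apply, one_smul]

/-- The `f`-term of the boundary of the basis element `S`, as a function of all `f : E`. -/
def Dt (i : ℕ) (S : ConnSub ends (i + 1)) (f : E) : CConn ends i :=
  if h : f ∈ S.1 ∧ IsConn ends (S.1.erase f) then
    ((-1 : ℤ) ^ nuEdge f S.1) •
      Finsupp.single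
        (⟨S.1.erase f, by simp [Finset.card_erase_of_mem h.1, S.2.1], h.2⟩ : ConnSub ends i) 1
  else 0

lemma bdry_single (i : ℕ) (S : ConnSub ends (i + 1)) :
    bdry ends i (Finsupp.single S 1) = ∑ f : E, Dt ends i S f := by
  unfold bdry
  rw [lsum_span_single]
  have h1 : ∀ x ∈ S.1.attach,
      (if h : IsConn ends (S.1.erase x.1) then
        ((-1 : ℤ) ^ nuEdge x.1 S.1) •
          Finsupp.single
            (⟨S.1.erase x.1, by simp [Finset.card_erase_of_mem x.2, S.2.1], h⟩ :
              ConnSub ends i) 1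
      else 0) = Dt ends i S x.1 := by
    intro x _
    unfold Dt
    by_cases h : IsConn ends (S.1.erase x.1)
    · rw [dif_pos h, dif_pos ⟨x.2, h⟩]
    · rw [dif_neg h, dif_neg (fun hc => h hc.2)]
  rw [Finset.sum_congr rfl h1, Finset.sum_attach]
  refine Finset.sum_subset (Finset.subset_univ _) (fun f _ hf => ?_)
  unfold Dt
  rw [dif_neg (fun hc => hf hc.1)]

end BdrySingle

section Maps

set_option linter.unusedSectionVars false

variable {V E : Type} [Fintype V] [DecidableEq V] [Fintype E] [LinearOrder E]
  (ends : E → Sym2 V) (e e' : E)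



/-- Adding an edge parallel to an edge of `T` does not change connectivity. -/
lemma isConn_insert_parallel_iff (hsame : ends e = ends e') (hne : e ≠ e')
    {T : Finset E} (he : e ∈ T) (he' : e' ∉ T) :
    IsConn ends (insert e' T) ↔ IsConn ends T := by
  have h := isConn_erase_parallel (S := insert e' T) hsame
    (Finset.mem_insert_of_mem he) hne
  rw [Finset.erase_insert he'] at h
  exact h.symm

/-- `ψ`: inclusion of `C_conn(Γ∖e)` into `C_conn(Γ)`. -/
def psiMap (i : ℕ) : CConn (fun f : {f : E // f ≠ e} => ends f.1) i →ₗ[ℤ] CConn ends i :=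
  Finsupp.lsum ℤ fun S' : ConnSub (fun f : {f : E // f ≠ e} => ends f.1) i =>
    LinearMap.toSpanSingleton ℤ (CConn ends i)
      (Finsupp.single
        (⟨upF e S'.1, by simp [S'.2.1], isConn_upF.1 S'.2.2⟩ : ConnSub ends i) 1)

lemma psiMap_single (i : ℕ) (S' : ConnSub (fun f : {f : E // f ≠ e} => ends f.1) i) :
    psiMap ends e i (Finsupp.single S' 1) =
      Finsupp.single
        (⟨upF e S'.1, by simp [S'.2.1], isConn_upF.1 S'.2.2⟩ : ConnSub ends i) 1 := by
  unfold psiMap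
  rw [lsum_span_single]


lemma conn_Tstar (hne : e ≠ e') (hsame : ends e = ends e') {S : Finset E}
    (hS : IsConn ends S) : IsConn ends (insert e' (S.erase e)) := by
  have h1 : IsConn ends (insert e' S) := isConn_mono (Finset.subset_insert _ _) hS
  have h2 := (isConn_erase_parallel (S := insert e' S) hsame.symm
    (Finset.mem_insert_self e' S) hne.symm).2 h1
  rwa [Finset.erase_insert_of_ne hne.symm] at h2

lemma not_mem_Tstar (hne : e ≠ e') {S : Finset E} : e ∉ insert e' (S.erase e) := by
  simp [Finset.mem_insert, Finset.mem_erase, hne]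

lemma conn_phi_mid (hne : e ≠ e') (hsame : ends e = ends e') {S : Finset E} (hS : IsConn ends S) (he : e ∈ S) (he' : e' ∉ S) :
    IsConn (fun f : {f : E // f ≠ e} => ends f.1) (downF e (insert e' (S.erase e))) := by
  rw [isConn_upF (e := e), upF_downF (not_mem_Tstar e e' hne)]
  exact conn_Tstar ends e e' hne hsame hS

lemma card_phi_mid (hne : e ≠ e') {S : Finset E} {i : ℕ} (hc : S.card = i) (he : e ∈ S) (he' : e' ∉ S) :
    (downF e (insert e' (S.erase e))).card = i := by
  have hnm : e ∉ insert e' (S.erase e) := by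
    simp [Finset.mem_insert, Finset.mem_erase, hne]
  rw [card_downF hnm, Finset.card_insert_of_notMem (fun hc2 => he' (Finset.mem_of_mem_erase hc2)),
    Finset.card_erase_of_mem he]
  have : 1 ≤ S.card := Finset.card_pos.2 ⟨e, he⟩
  omega

lemma conn_phi_out {S : Finset E} (hS : IsConn ends S) (he : e ∉ S) :
    IsConn (fun f : {f : E // f ≠ e} => ends f.1) (downF e S) := by
  rw [isConn_upF (e := e), upF_downF he]
  exact hS

/-- `φ`: projection of `C_conn(Γ)` onto `C_conn(Γ∖e)`. -/
def phiMap (hne : e ≠ e') (hsame : ends e = ends e') (i : ℕ) : CConn ends i →ₗ[ℤ] CConn (fun f : {f : E // f ≠ e} => ends f.1) i :=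
  Finsupp.lsum ℤ fun S : ConnSub ends i =>
    LinearMap.toSpanSingleton ℤ (CConn (fun f : {f : E // f ≠ e} => ends f.1) i)
      (if he : e ∈ S.1 then
        if he' : e' ∈ S.1 then 0
        else
          (-((-1 : ℤ) ^ (nuEdge e' (insert e' S.1) + nuEdge e (insert e' S.1)))) •
            Finsupp.single
              (⟨downF e (insert e' (S.1.erase e)), card_phi_mid e e' hne S.2.1 he he',
                conn_phi_mid ends e e' hne hsame S.2.2 he he'⟩ : ConnSub (fun f : {f : E // f ≠ e} => ends f.1) i) 1
      else
        Finsupp.single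
          (⟨downF e S.1, by rw [card_downF he, S.2.1],
            conn_phi_out ends e S.2.2 he⟩ : ConnSub (fun f : {f : E // f ≠ e} => ends f.1) i) 1)

lemma phiMap_single (hne : e ≠ e') (hsame : ends e = ends e') (i : ℕ) (S : ConnSub ends i) :
    phiMap ends e e' hne hsame i (Finsupp.single S 1) =
      (if he : e ∈ S.1 then
        if he' : e' ∈ S.1 then 0
        else
          (-((-1 : ℤ) ^ (nuEdge e' (insert e' S.1) + nuEdge e (insert e' S.1)))) •
            Finsupp.single
              (⟨downF e (insert e' (S.1.erase e)), card_phi_mid e e' hne S.2.1 he he',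
                conn_phi_mid ends e e' hne hsame S.2.2 he he'⟩ : ConnSub (fun f : {f : E // f ≠ e} => ends f.1) i) 1
      else
        Finsupp.single
          (⟨downF e S.1, by rw [card_downF he, S.2.1],
            conn_phi_out ends e S.2.2 he⟩ : ConnSub (fun f : {f : E // f ≠ e} => ends f.1) i) 1) := by
  unfold phiMap
  rw [lsum_span_single]

/-- `H`: the chain homotopy, given by adding the edge `e'`. -/
def hMap (i : ℕ) : CConn ends i →ₗ[ℤ] CConn ends (i + 1) :=
  Finsupp.lsum ℤ fun S : ConnSub ends i =>
    LinearMap.toSpanSingleton ℤ (CConn ends (i + 1))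
      (if h : e ∈ S.1 ∧ e' ∉ S.1 then
        ((-1 : ℤ) ^ nuEdge e' (insert e' S.1)) •
          Finsupp.single
            (⟨insert e' S.1, by rw [Finset.card_insert_of_notMem h.2, S.2.1],
              isConn_mono (Finset.subset_insert _ _) S.2.2⟩ : ConnSub ends (i + 1)) 1
      else 0)

lemma hMap_single (i : ℕ) (S : ConnSub ends i) :
    hMap ends e e' i (Finsupp.single S 1) =
      (if h : e ∈ S.1 ∧ e' ∉ S.1 then
        ((-1 : ℤ) ^ nuEdge e' (insert e' S.1)) •
          Finsupp.single
            (⟨insert e' S.1, by rw [Finset.card_insert_of_notMem h.2, S.2.1],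
              isConn_mono (Finset.subset_insert _ _) S.2.2⟩ : ConnSub ends (i + 1)) 1
      else 0) := by
  unfold hMap
  rw [lsum_span_single]

end Maps

section MoreUpDown

set_option linter.unusedSectionVars false

variable {V E : Type} [Fintype V] [DecidableEq V] [Fintype E] [LinearOrder E]
  (ends : E → Sym2 V) (e : E)

lemma mem_upF_val {S' : Finset {f : E // f ≠ e}} {f : {f : E // f ≠ e}} :
    f.1 ∈ upF e S' ↔ f ∈ S' := by
  rw [mem_upF]
  constructor
  · rintro ⟨h, hm⟩
    obtain ⟨fv, hf⟩ := f
    exact hm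
  · intro hm
    exact ⟨f.2, by obtain ⟨fv, hf⟩ := f; exact hm⟩

lemma smul_single_congr {ι : Type} {a b : ι} (h : a = b) {s t : ℤ} (hs : s = t) :
    s • Finsupp.single a (1 : ℤ) = t • Finsupp.single b 1 := by
  subst h; subst hs; rfl

lemma Dt_upF_cond {S' : Finset {f : E // f ≠ e}} {f : {f : E // f ≠ e}} :
    (f.1 ∈ upF e S' ∧ IsConn ends ((upF e S').erase f.1)) ↔
      (f ∈ S' ∧ IsConn (fun g : {f : E // f ≠ e} => ends g.1) (S'.erase f)) := by
  rw [mem_upF_val, ← upF_erase, ← isConn_upF]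

lemma smul_smul_single_congr {ι : Type} {a b : ι} (h : a = b) {s₁ s₂ t : ℤ} (hs : s₁ * s₂ = t) :
    s₁ • s₂ • Finsupp.single a (1 : ℤ) = t • Finsupp.single b 1 := by
  rw [smul_smul]; exact smul_single_congr h hs

lemma smul_smul_single_one {ι : Type} {a b : ι} (h : a = b) {s₁ s₂ : ℤ} (hs : s₁ * s₂ = 1) :
    s₁ • s₂ • Finsupp.single a (1 : ℤ) = Finsupp.single b 1 := by
  subst h
  rw [smul_smul, hs, one_smul]

lemma smul_single_cancel {ι : Type} {x y : ι} (h : x = y) {a b : ℤ} (hab : a + b = 0) :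
    a • Finsupp.single x (1 : ℤ) + b • Finsupp.single y 1 = 0 := by
  subst h
  rw [← add_smul, hab, zero_smul]

end MoreUpDown

section NuIte

variable {E : Type} [LinearOrder E]

lemma nuEdge_insert_ite {S : Finset E} {g f : E} (hg : g ∉ S) :
    nuEdge f (insert g S) = nuEdge f S + (if g < f then 1 else 0) := by
  by_cases h : g < f
  · rw [nuEdge_insert_of_lt hg h, if_pos h]
  · rw [nuEdge_insert_of_not_lt h, if_neg h, add_zero]

lemma nuEdge_erase_ite {S : Finset E} {g f : E} (hg : g ∈ S) :
    nuEdge f S = nuEdge f (S.erase g) + (if g < f then 1 else 0) := by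
  by_cases h : g < f
  · rw [nuEdge_erase_of_lt hg h, if_pos h]
  · rw [nuEdge_erase_of_not_lt h, if_neg h, add_zero]

lemma ite_lt_add_ite_lt {f g : E} (h : f ≠ g) :
    (if f < g then (1:ℕ) else 0) + (if g < f then 1 else 0) = 1 := by
  rcases lt_trichotomy f g with h1 | h1 | h1
  · rw [if_pos h1, if_neg (asymm h1)]
  · exact absurd h1 h
  · rw [if_neg (asymm h1), if_pos h1]

end NuIte

section Identities

set_option linter.unusedSectionVars false

variable {V E : Type} [Fintype V] [DecidableEq V] [Fintype E] [LinearOrder E]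
  (ends : E → Sym2 V) (e e' : E) (hne : e ≠ e') (hsame : ends e = ends e')

lemma phi_psi (i : ℕ) :
    (phiMap ends e e' hne hsame i).comp (psiMap ends e i) = LinearMap.id := by
  apply lhom_ext_one
  intro S'
  rw [LinearMap.comp_apply, psiMap_single, phiMap_single, dif_neg (e_not_mem_upF (S' := S'.1)),
    LinearMap.id_apply]
  exact congrArg (fun z => Finsupp.single z 1) (Subtype.ext (downF_upF S'.1))

lemma chain_psi (i : ℕ) :
    (bdry ends i).comp (psiMap ends e (i + 1)) =
      (psiMap ends e i).comp (bdry (fun f : {f : E // f ≠ e} => ends f.1) i) := by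
  apply lhom_ext_one
  intro S'
  rw [LinearMap.comp_apply, LinearMap.comp_apply, psiMap_single, bdry_single, bdry_single,
    map_sum]
  refine ((sum_univ_subtype_ne e _ ?_).symm).trans
    (Finset.sum_congr (by congr 1 <;> exact Subsingleton.elim _ _) fun f' _ => ?_)
  · unfold Dt
    rw [dif_neg]
    rintro ⟨hmem, -⟩
    exact e_not_mem_upF hmem
  · unfold Dt
    by_cases h1 : f' ∈ S'.1 ∧ IsConn (fun g : {f : E // f ≠ e} => ends g.1) (S'.1.erase f')
    · rw [dif_pos h1, dif_pos ((Dt_upF_cond ends e).2 h1), LinearMap.map_smul, psiMap_single]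
      refine smul_single_congr (Subtype.ext ?_) ?_
      · exact (upF_erase S'.1 f').symm
      · rw [nuEdge_upF]
    · rw [dif_neg h1, dif_neg (fun hc => h1 ((Dt_upF_cond ends e).1 hc)), map_zero]

lemma chain_phi (i : ℕ) :
    (bdry (fun f : {f : E // f ≠ e} => ends f.1) i).comp (phiMap ends e e' hne hsame (i + 1)) =
      (phiMap ends e e' hne hsame i).comp (bdry ends i) := by
  apply lhom_ext_one
  intro S
  classical
  simp only [LinearMap.comp_apply]
  rw [phiMap_single]
  by_cases he : e ∈ S.1
  · by_cases he' : e' ∈ S.1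
    · -- Case B : e, e' ∈ S
      rw [dif_pos he, dif_pos he', map_zero, bdry_single, map_sum, sum_univ_split e e' hne]
      have hconnSe : IsConn ends (S.1.erase e) :=
        (isConn_erase_parallel hsame.symm he' hne.symm).2 S.2.2
      have hconnSe' : IsConn ends (S.1.erase e') :=
        (isConn_erase_parallel hsame he hne).2 S.2.2
      have hrest : ∑ f ∈ (Finset.univ.erase e).erase e',
          phiMap ends e e' hne hsame i (Dt ends i S f) = 0 := by
        refine Finset.sum_eq_zero fun f hf => ?_
        have hf1 : f ≠ e' := (Finset.mem_erase.1 hf).1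
        have hf2 : f ≠ e := (Finset.mem_erase.1 (Finset.mem_erase.1 hf).2).1
        unfold Dt
        by_cases hc : f ∈ S.1 ∧ IsConn ends (S.1.erase f)
        · rw [dif_pos hc, LinearMap.map_smul, phiMap_single,
            dif_pos (Finset.mem_erase.2 ⟨Ne.symm hf2, he⟩),
            dif_pos (Finset.mem_erase.2 ⟨Ne.symm hf1, he'⟩), smul_zero]
        · rw [dif_neg hc, map_zero]
      rw [hrest, add_zero]
      unfold Dt
      rw [dif_pos ⟨he, hconnSe⟩, dif_pos ⟨he', hconnSe'⟩, LinearMap.map_smul,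
        LinearMap.map_smul, phiMap_single, phiMap_single,
        dif_neg (Finset.notMem_erase e S.1),
        dif_pos (Finset.mem_erase.2 ⟨hne, he⟩), dif_neg (Finset.notMem_erase e' S.1),
        smul_smul]
      symm
      refine smul_single_cancel (Subtype.ext ?_) ?_
      · show downF e (S.1.erase e) = downF e (insert e' ((S.1.erase e').erase e))
        rw [Finset.erase_right_comm,
          Finset.insert_erase (Finset.mem_erase.2 ⟨hne.symm, he'⟩)]
      · have hins : insert e' (S.1.erase e') = S.1 := Finset.insert_erase he'
        have hnu1 : nuEdge e' (insert e' (S.1.erase e')) = nuEdge e' S.1 := by rw [hins]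
        have hnu2 : nuEdge e (insert e' (S.1.erase e')) = nuEdge e S.1 := by rw [hins]
        rw [hnu1, hnu2, mul_neg, ← pow_add,
          neg_one_pow_eq_of_mod (a := nuEdge e' S.1 + (nuEdge e' S.1 + nuEdge e S.1))
            (b := nuEdge e S.1) (by omega), add_neg_cancel]
    · -- Case C : e ∈ S, e' ∉ S
      rw [dif_pos he, dif_neg he', LinearMap.map_smul, bdry_single, bdry_single,
        Finset.smul_sum, map_sum, sum_univ_split e e' hne, ← Finset.add_sum_erase _ _
          (Finset.mem_univ (⟨e', Ne.symm hne⟩ : {f : E // f ≠ e}))]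
      have hTnm : e ∉ insert e' (S.1.erase e) := not_mem_Tstar e e' hne
      have hte' : phiMap ends e e' hne hsame i (Dt ends i S e') = 0 := by
        unfold Dt
        rw [dif_neg (fun hc => he' hc.1), map_zero]
      refine congrArg₂ (· + ·) ?_ ?_
      · -- the e'' term matches the f = e term
        rw [hte', add_zero]
        unfold Dt
        by_cases hcse : IsConn ends (S.1.erase e)
        · have hcW : (⟨e', Ne.symm hne⟩ : {f : E // f ≠ e}) ∈
              downF e (insert e' (S.1.erase e)) ∧
              IsConn (fun f : {f : E // f ≠ e} => ends f.1)
                ((downF e (insert e' (S.1.erase e))).erase ⟨e', Ne.symm hne⟩) := by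
            refine ⟨mem_downF.2 (Finset.mem_insert_self e' _), ?_⟩
            rw [← downF_erase, Finset.erase_insert
              (fun hc => he' (Finset.mem_of_mem_erase hc)), isConn_upF,
              upF_downF (Finset.notMem_erase e S.1)]
            exact hcse
          rw [dif_pos hcW, dif_pos ⟨he, hcse⟩, LinearMap.map_smul, phiMap_single,
            dif_neg (Finset.notMem_erase e S.1), smul_smul]
          refine smul_single_congr (Subtype.ext ?_) ?_
          · show (downF e (insert e' (S.1.erase e))).erase ⟨e', Ne.symm hne⟩ =
              downF e (S.1.erase e)
            rw [← downF_erase, Finset.erase_insert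
              (fun hc => he' (Finset.mem_of_mem_erase hc))]
          · have hnu : nuEdge (⟨e', Ne.symm hne⟩ : {f : E // f ≠ e})
                (downF e (insert e' (S.1.erase e))) = nuEdge e' (insert e' (S.1.erase e)) := by
              rw [nuEdge_upF, upF_downF hTnm]
            have m1 : nuEdge e' (insert e' S.1) = nuEdge e' S.1 :=
              nuEdge_insert_of_not_lt (lt_irrefl e')
            have m2 : nuEdge e (insert e' S.1) = nuEdge e S.1 + (if e' < e then 1 else 0) :=
              nuEdge_insert_ite he'
            have m3 : nuEdge e' (insert e' (S.1.erase e)) = nuEdge e' (S.1.erase e) :=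
              nuEdge_insert_of_not_lt (lt_irrefl e')
            have m4 : nuEdge e' S.1 = nuEdge e' (S.1.erase e) + (if e < e' then 1 else 0) :=
              nuEdge_erase_ite he
            have p1 := ite_lt_add_ite_lt hne
            rw [hnu, neg_mul, ← pow_add,
              neg_one_pow_ne_of_mod (b := nuEdge e S.1) (by omega), neg_neg]
        · have hcW : ¬((⟨e', Ne.symm hne⟩ : {f : E // f ≠ e}) ∈
              downF e (insert e' (S.1.erase e)) ∧
              IsConn (fun f : {f : E // f ≠ e} => ends f.1)
                ((downF e (insert e' (S.1.erase e))).erase ⟨e', Ne.symm hne⟩)) := by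
            rintro ⟨-, hc2⟩
            rw [← downF_erase, Finset.erase_insert
              (fun hc => he' (Finset.mem_of_mem_erase hc)), isConn_upF,
              upF_downF (Finset.notMem_erase e S.1)] at hc2
            exact hcse hc2
          rw [dif_neg hcW, dif_neg (fun hc => hcse hc.2), map_zero, smul_zero]
      · -- remaining sums match
        refine Finset.sum_nbij' (fun f' => f'.1)
          (fun f => if h : f = e then (⟨e', Ne.symm hne⟩ : {f : E // f ≠ e}) else ⟨f, h⟩)
          ?_ ?_ ?_ ?_ ?_
        · intro f' hf'
          have h1 : f' ≠ (⟨e', Ne.symm hne⟩ : {f : E // f ≠ e}) := (Finset.mem_erase.1 hf').1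
          refine Finset.mem_erase.2 ⟨fun hc => h1 (Subtype.ext hc), ?_⟩
          exact Finset.mem_erase.2 ⟨f'.2, Finset.mem_univ _⟩
        · intro f hf
          have hf1 : f ≠ e' := (Finset.mem_erase.1 hf).1
          have hf2 : f ≠ e := (Finset.mem_erase.1 (Finset.mem_erase.1 hf).2).1
          split
          next h => exact absurd h hf2
          next h =>
            exact Finset.mem_erase.2
              ⟨fun hc => hf1 (congrArg Subtype.val hc), Finset.mem_univ _⟩
        · intro f' hf'
          split
          next h => exact absurd h f'.2
          next h => rfl
        · intro f hf
          have hf2 : f ≠ e := (Finset.mem_erase.1 (Finset.mem_erase.1 hf).2).1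
          split
          next h => exact absurd h hf2
          next h => rfl
        · intro f' hf'
          have hfe' : f'.1 ≠ e' := fun hc =>
            (Finset.mem_erase.1 hf').1 (Subtype.ext hc)
          have hfe : f'.1 ≠ e := f'.2
          have hsetW : (downF e (insert e' (S.1.erase e))).erase f' =
              downF e (insert e' ((S.1.erase f'.1).erase e)) := by
            rw [← downF_erase, Finset.erase_insert_of_ne (Ne.symm hfe'),
              Finset.erase_right_comm]
          have hcond : (f' ∈ downF e (insert e' (S.1.erase e)) ∧
              IsConn (fun g : {f : E // f ≠ e} => ends g.1)
                ((downF e (insert e' (S.1.erase e))).erase f')) ↔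
              (f'.1 ∈ S.1 ∧ IsConn ends (S.1.erase f'.1)) := by
            rw [hsetW, mem_downF, Finset.mem_insert, isConn_upF,
              upF_downF (not_mem_Tstar e e' hne)]
            have hiff1 : IsConn ends (insert e' (S.1.erase f'.1)) ↔
                IsConn ends (S.1.erase f'.1) :=
              isConn_insert_parallel_iff ends e e' hsame hne
                (Finset.mem_erase.2 ⟨Ne.symm hfe, he⟩)
                (fun hc => he' (Finset.mem_of_mem_erase hc))
            have hiff2 : IsConn ends ((insert e' (S.1.erase f'.1)).erase e) ↔
                IsConn ends (insert e' (S.1.erase f'.1)) :=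
              isConn_erase_parallel hsame.symm (Finset.mem_insert_self e' _) hne.symm
            rw [Finset.erase_insert_of_ne hne.symm] at hiff2
            constructor
            · rintro ⟨hm | hm, hcn⟩
              · exact absurd hm hfe'
              · exact ⟨Finset.mem_of_mem_erase hm, hiff1.1 (hiff2.1 hcn)⟩
            · rintro ⟨hm, hcn⟩
              exact ⟨Or.inr (Finset.mem_erase.2 ⟨hfe, hm⟩), hiff2.2 (hiff1.2 hcn)⟩
          unfold Dt
          by_cases hc : f'.1 ∈ S.1 ∧ IsConn ends (S.1.erase f'.1)
          · rw [dif_pos (hcond.2 hc), dif_pos hc, LinearMap.map_smul, phiMap_single,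
              dif_pos (Finset.mem_erase.2 ⟨Ne.symm hfe, he⟩),
              dif_neg (fun hcx => he' (Finset.mem_of_mem_erase hcx)), smul_smul, smul_smul]
            dsimp only
            refine smul_single_congr (Subtype.ext ?_) ?_
            · exact hsetW
            · have hnu : nuEdge f' (downF e (insert e' (S.1.erase e))) =
                  nuEdge f'.1 (insert e' (S.1.erase e)) := by
                rw [nuEdge_upF, upF_downF hTnm]
              have m1 : nuEdge e' (insert e' S.1) = nuEdge e' S.1 :=
                nuEdge_insert_of_not_lt (lt_irrefl e')
              have m2 : nuEdge e (insert e' S.1) = nuEdge e S.1 + (if e' < e then 1 else 0) :=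
                nuEdge_insert_ite he'
              have m3 : nuEdge f'.1 (insert e' (S.1.erase e)) =
                  nuEdge f'.1 (S.1.erase e) + (if e' < f'.1 then 1 else 0) :=
                nuEdge_insert_ite (fun hc2 => he' (Finset.mem_of_mem_erase hc2))
              have m4 : nuEdge f'.1 S.1 = nuEdge f'.1 (S.1.erase e) + (if e < f'.1 then 1 else 0) :=
                nuEdge_erase_ite he
              have m5 : nuEdge e' (insert e' (S.1.erase f'.1)) = nuEdge e' (S.1.erase f'.1) :=
                nuEdge_insert_of_not_lt (lt_irrefl e')
              have m6 : nuEdge e' S.1 = nuEdge e' (S.1.erase f'.1) + (if f'.1 < e' then 1 else 0) :=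
                nuEdge_erase_ite hc.1
              have m7 : nuEdge e (insert e' (S.1.erase f'.1)) =
                  nuEdge e (S.1.erase f'.1) + (if e' < e then 1 else 0) :=
                nuEdge_insert_ite (fun hc2 => he' (Finset.mem_of_mem_erase hc2))
              have m8 : nuEdge e S.1 = nuEdge e (S.1.erase f'.1) + (if f'.1 < e then 1 else 0) :=
                nuEdge_erase_ite hc.1
              have p1 := ite_lt_add_ite_lt hfe'
              have p2 := ite_lt_add_ite_lt hfe
              rw [hnu, neg_mul, mul_neg, ← pow_add, ← pow_add]
              refine congrArg Neg.neg (neg_one_pow_eq_of_mod ?_)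
              omega
          · rw [dif_neg (fun hx => hc (hcond.1 hx)), dif_neg hc, smul_zero, map_zero]
  · -- Case A : e ∉ S
    rw [dif_neg he, bdry_single, bdry_single, map_sum]
    refine (Finset.sum_congr (by congr 1 <;> exact Subsingleton.elim _ _) fun f' _ => ?_).trans
      (sum_univ_subtype_ne e _ ?_)
    · have hsetW : (downF e S.1).erase f' = downF e (S.1.erase f'.1) :=
        (downF_erase S.1 f').symm
      have hcond : (f' ∈ downF e S.1 ∧ IsConn (fun g : {f : E // f ≠ e} => ends g.1)
          ((downF e S.1).erase f')) ↔ (f'.1 ∈ S.1 ∧ IsConn ends (S.1.erase f'.1)) := by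
        rw [hsetW, mem_downF, isConn_upF, upF_downF
          (fun hc => he (Finset.mem_of_mem_erase hc))]
      unfold Dt
      by_cases hc : f'.1 ∈ S.1 ∧ IsConn ends (S.1.erase f'.1)
      · rw [dif_pos (hcond.2 hc), dif_pos hc, LinearMap.map_smul, phiMap_single,
          dif_neg (fun hcx => he (Finset.mem_of_mem_erase hcx))]
        refine smul_single_congr (Subtype.ext hsetW) ?_
        rw [nuEdge_upF, upF_downF he]
      · rw [dif_neg (fun hx => hc (hcond.1 hx)), dif_neg hc, map_zero]
    · unfold Dt
      rw [dif_neg (fun hc => he hc.1), map_zero]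

lemma homotopy0 :
    (bdry ends 0).comp (hMap ends e e' 0) =
      LinearMap.id - (psiMap ends e 0).comp (phiMap ends e e' hne hsame 0) := by
  apply lhom_ext_one
  intro S
  have he : e ∉ S.1 := by
    rw [Finset.card_eq_zero.1 S.2.1]
    exact Finset.notMem_empty e
  simp only [LinearMap.comp_apply, LinearMap.sub_apply, LinearMap.id_apply]
  rw [hMap_single, dif_neg (fun hc => he hc.1), map_zero, phiMap_single, dif_neg he,
    psiMap_single, eq_comm, sub_eq_zero]
  exact congrArg (fun z => Finsupp.single z 1) (Subtype.ext (upF_downF he).symm)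

lemma homotopy (i : ℕ) :
    (bdry ends (i + 1)).comp (hMap ends e e' (i + 1)) +
        (hMap ends e e' i).comp (bdry ends i) =
      LinearMap.id - (psiMap ends e (i + 1)).comp (phiMap ends e e' hne hsame (i + 1)) := by
  apply lhom_ext_one
  intro S
  simp only [LinearMap.comp_apply, LinearMap.add_apply, LinearMap.sub_apply, LinearMap.id_apply]
  by_cases he : e ∈ S.1
  · by_cases he' : e' ∈ S.1
    · -- Case B : e ∈ S, e' ∈ S
      rw [hMap_single, dif_neg (fun hc => hc.2 he'), map_zero, zero_add, phiMap_single,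
        dif_pos he, dif_pos he', map_zero, sub_zero, bdry_single, map_sum]
      refine (Finset.sum_eq_single_of_mem (f := fun f => hMap ends e e' i (Dt ends i S f)) e'
        (Finset.mem_univ e') ?_).trans ?_
      · intro f _ hf
        unfold Dt
        by_cases h2 : f ∈ S.1 ∧ IsConn ends (S.1.erase f)
        · rw [dif_pos h2, LinearMap.map_smul, hMap_single, dif_neg, smul_zero]
          rintro ⟨-, hc2⟩
          exact hc2 (Finset.mem_erase.2 ⟨Ne.symm hf, he'⟩)
        · rw [dif_neg h2, map_zero]
      · unfold Dt
        have hconn2 : IsConn ends (S.1.erase e') :=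
          (isConn_erase_parallel hsame he hne).2 S.2.2
        rw [dif_pos ⟨he', hconn2⟩, LinearMap.map_smul, hMap_single,
          dif_pos ⟨Finset.mem_erase.2 ⟨hne, he⟩, Finset.notMem_erase e' S.1⟩]
        refine smul_smul_single_one (Subtype.ext (Finset.insert_erase he')) ?_
        have hnu : nuEdge e' (insert e' (S.1.erase e')) = nuEdge e' S.1 := by
          rw [Finset.insert_erase he']
        rw [hnu, ← pow_add]
        exact Even.neg_one_pow ⟨nuEdge e' S.1, rfl⟩
    · -- Case C : e ∈ S, e' ∉ S
      have hcardSp : (insert e' S.1).card = i + 1 + 1 := by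
        rw [Finset.card_insert_of_notMem he', S.2.1]
      have hconnSp : IsConn ends (insert e' S.1) :=
        isConn_mono (Finset.subset_insert _ _) S.2.2
      have hcardU : (insert e' (S.1.erase e)).card = i + 1 := by
        rw [Finset.card_insert_of_notMem (fun hc => he' (Finset.mem_of_mem_erase hc)),
          Finset.card_erase_of_mem he, S.2.1]
        omega
      have hconnU : IsConn ends (insert e' (S.1.erase e)) :=
        conn_Tstar ends e e' hne hsame S.2.2
      set Sp : ConnSub ends (i + 1 + 1) := ⟨insert e' S.1, hcardSp, hconnSp⟩ with hSp
      set U : ConnSub ends (i + 1) := ⟨insert e' (S.1.erase e), hcardU, hconnU⟩ with hU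
      set σ : ℤ := (-1 : ℤ) ^ (nuEdge e' (insert e' S.1) + nuEdge e (insert e' S.1)) with hσ
      have hhS : hMap ends e e' (i + 1) (Finsupp.single S 1) =
          ((-1 : ℤ) ^ nuEdge e' (insert e' S.1)) • Finsupp.single Sp (1 : ℤ) := by
        rw [hMap_single, dif_pos ⟨he, he'⟩, hSp]
      have hR : psiMap ends e (i + 1)
            (phiMap ends e e' hne hsame (i + 1) (Finsupp.single S 1)) =
          (-σ) • Finsupp.single U (1 : ℤ) := by
        rw [phiMap_single, dif_pos he, dif_neg he', LinearMap.map_smul, psiMap_single, hσ, hU]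
        exact smul_single_congr (Subtype.ext (upF_downF (not_mem_Tstar e e' hne))) rfl
      rw [hhS, hR, LinearMap.map_smul, bdry_single, Finset.smul_sum, bdry_single, map_sum,
        ← Finset.sum_add_distrib, sub_eq_add_neg, ← neg_smul, neg_neg]
      have hrhs : (Finsupp.single S (1 : ℤ) : CConn ends (i + 1)) +
          σ • Finsupp.single U (1 : ℤ) =
          ∑ f : E, ((if f = e' then (Finsupp.single S (1 : ℤ) : CConn ends (i + 1)) else 0) +
            (if f = e then σ • Finsupp.single U (1 : ℤ) else 0)) := by
        rw [Finset.sum_add_distrib, Finset.sum_ite_eq' Finset.univ e', Finset.sum_ite_eq'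
          Finset.univ e, if_pos (Finset.mem_univ e'), if_pos (Finset.mem_univ e)]
      rw [hrhs]
      refine Finset.sum_congr rfl fun f _ => ?_
      by_cases hfe' : f = e'
      · rw [if_pos hfe', if_neg (fun hc : f = e => hne (hc.symm.trans hfe'))]
        have hsub := hfe'.symm
        subst hsub
        rw [add_zero]
        have h2 : Dt ends i S e' = 0 := by
          unfold Dt
          exact dif_neg (fun hc => he' hc.1)
        rw [h2, map_zero, add_zero]
        unfold Dt
        have hcd : e' ∈ Sp.1 ∧ IsConn ends (Sp.1.erase e') := by
          rw [hSp]
          exact ⟨Finset.mem_insert_self e' S.1, by rw [Finset.erase_insert he']; exact S.2.2⟩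
        rw [dif_pos hcd]
        have hset : Sp.1.erase e' = S.1 := by rw [hSp]; exact Finset.erase_insert he'
        refine smul_smul_single_one (Subtype.ext hset) ?_
        have hnu : nuEdge e' Sp.1 = nuEdge e' (insert e' S.1) := by rw [hSp]
        rw [hnu, ← pow_add]
        exact Even.neg_one_pow ⟨nuEdge e' (insert e' S.1), rfl⟩
      · by_cases hfe : f = e
        · rw [if_neg hfe', if_pos hfe, zero_add]
          have hsub := hfe.symm
          subst hsub
          have h2 : hMap ends e e' i (Dt ends i S e) = 0 := by
            unfold Dt
            by_cases h3 : e ∈ S.1 ∧ IsConn ends (S.1.erase e)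
            · rw [dif_pos h3, LinearMap.map_smul, hMap_single, dif_neg, smul_zero]
              rintro ⟨hc1, -⟩
              exact (Finset.notMem_erase e S.1) hc1
            · rw [dif_neg h3, map_zero]
          rw [h2, add_zero]
          unfold Dt
          have hcd : e ∈ Sp.1 ∧ IsConn ends (Sp.1.erase e) := by
            rw [hSp]
            exact ⟨Finset.mem_insert_of_mem he, by
              rw [Finset.erase_insert_of_ne hne.symm]; exact hconnU⟩
          rw [dif_pos hcd]
          have hset : Sp.1.erase e = U.1 := by
            rw [hSp, hU]
            exact Finset.erase_insert_of_ne hne.symm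
          refine smul_smul_single_congr (Subtype.ext hset) ?_
          have hnu : nuEdge e Sp.1 = nuEdge e (insert e' S.1) := by rw [hSp]
          rw [hnu, hσ, pow_add]
        · rw [if_neg hfe', if_neg hfe, add_zero]
          have hcond : (f ∈ Sp.1 ∧ IsConn ends (Sp.1.erase f)) ↔
              (f ∈ S.1 ∧ IsConn ends (S.1.erase f)) := by
            rw [hSp]
            show (f ∈ insert e' S.1 ∧ IsConn ends ((insert e' S.1).erase f)) ↔ _
            rw [Finset.erase_insert_of_ne (Ne.symm hfe'), Finset.mem_insert]
            have hiff := isConn_insert_parallel_iff ends e e' hsame hne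
              (Finset.mem_erase.2 ⟨Ne.symm hfe, he⟩)
              (fun hc => he' (Finset.mem_of_mem_erase hc))
            constructor
            · rintro ⟨hm | hm, hcn⟩
              · exact absurd hm hfe'
              · exact ⟨hm, hiff.1 hcn⟩
            · rintro ⟨hm, hcn⟩
              exact ⟨Or.inr hm, hiff.2 hcn⟩
          unfold Dt
          by_cases hc : f ∈ S.1 ∧ IsConn ends (S.1.erase f)
          · rw [dif_pos hc, dif_pos (hcond.2 hc), LinearMap.map_smul, hMap_single,
              dif_pos ⟨Finset.mem_erase.2 ⟨Ne.symm hfe, he⟩,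
                fun hcx => he' (Finset.mem_of_mem_erase hcx)⟩,
              smul_smul, smul_smul]
            refine smul_single_cancel (Subtype.ext ?_) ?_
            · show (insert e' S.1).erase f = insert e' (S.1.erase f)
              exact Finset.erase_insert_of_ne (Ne.symm hfe')
            · have hnu : nuEdge f Sp.1 = nuEdge f (insert e' S.1) := by rw [hSp]
              rw [hnu, ← pow_add, ← pow_add]
              have n1 : nuEdge e' (insert e' S.1) = nuEdge e' S.1 :=
                nuEdge_insert_of_not_lt (lt_irrefl e')
              have n2 : nuEdge f (insert e' S.1) = nuEdge f S.1 + (if e' < f then 1 else 0) :=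
                nuEdge_insert_ite he'
              have n3 : nuEdge e' (insert e' (S.1.erase f)) = nuEdge e' (S.1.erase f) :=
                nuEdge_insert_of_not_lt (lt_irrefl e')
              have n4 : nuEdge e' S.1 = nuEdge e' (S.1.erase f) + (if f < e' then 1 else 0) :=
                nuEdge_erase_ite hc.1
              have hA : ((-1 : ℤ)) ^ (nuEdge e' (insert e' S.1) + nuEdge f (insert e' S.1)) =
                  -(-1) ^ (nuEdge f S.1 + nuEdge e' (insert e' (S.1.erase f))) := by
                apply neg_one_pow_ne_of_mod
                rw [n1, n2, n3, n4]
                rcases lt_trichotomy f e' with h | h | h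
                · rw [if_pos h, if_neg (asymm h)]
                  omega
                · exact absurd h hfe'
                · rw [if_neg (asymm h), if_pos h]
                  omega
              rw [hA, neg_add_cancel]
          · rw [dif_neg hc, dif_neg (fun hx => hc (hcond.1 hx)), smul_zero, map_zero, add_zero]
  · -- Case A : e ∉ S
    rw [hMap_single, dif_neg (fun hc => he hc.1), map_zero, zero_add, phiMap_single,
      dif_neg he, psiMap_single, bdry_single, map_sum]
    have hz : ∀ f ∈ Finset.univ, hMap ends e e' i (Dt ends i S f) = 0 := by
      intro f _
      unfold Dt
      by_cases h2 : f ∈ S.1 ∧ IsConn ends (S.1.erase f)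
      · rw [dif_pos h2, LinearMap.map_smul, hMap_single, dif_neg, smul_zero]
        rintro ⟨hc1, -⟩
        exact he (Finset.mem_of_mem_erase hc1)
      · rw [dif_neg h2, map_zero]
    rw [Finset.sum_eq_zero hz, eq_comm, sub_eq_zero]
    exact congrArg (fun z => Finsupp.single z 1) (Subtype.ext (upF_downF he).symm)

end Identities
theorem homology_invariant_of_multiple_edge
    [Fintype V] [DecidableEq V] [Fintype E] [LinearOrder E]
    (ends : E → Sym2 V) (hconn : IsConn ends (Finset.univ : Finset E))
    (e e' : E) (hne : e ≠ e') (hsame : ends e = ends e') :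
    Nonempty (ConnH0 ends ≃ₗ[ℤ] ConnH0 (fun f : {f : E // f ≠ e} => ends f.1)) ∧
      ∀ i : ℕ,
        Nonempty (ConnH ends i ≃ₗ[ℤ] ConnH (fun f : {f : E // f ≠ e} => ends f.1) i) := by
  have hcphi : ∀ (i : ℕ) (z : CConn ends (i + 1)),
      bdry (fun f : {f : E // f ≠ e} => ends f.1) i (phiMap ends e e' hne hsame (i + 1) z) =
        phiMap ends e e' hne hsame i (bdry ends i z) := by
    intro i z
    have h := LinearMap.congr_fun (chain_phi ends e e' hne hsame i) z
    simpa only [LinearMap.comp_apply] using h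
  have hcpsi : ∀ (i : ℕ) (z : CConn (fun f : {f : E // f ≠ e} => ends f.1) (i + 1)),
      bdry ends i (psiMap ends e (i + 1) z) =
        psiMap ends e i (bdry (fun f : {f : E // f ≠ e} => ends f.1) i z) := by
    intro i z
    have h := LinearMap.congr_fun (chain_psi ends e i) z
    simpa only [LinearMap.comp_apply] using h
  have hpp : ∀ (i : ℕ) (y : CConn (fun f : {f : E // f ≠ e} => ends f.1) i),
      phiMap ends e e' hne hsame i (psiMap ends e i y) = y := by
    intro i y
    have h := LinearMap.congr_fun (phi_psi ends e e' hne hsame i) y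
    simpa only [LinearMap.comp_apply, LinearMap.id_apply] using h
  constructor
  · refine quotEquivOfMaps _ _ (phiMap ends e e' hne hsame 0) (psiMap ends e 0) ?_ ?_ ?_ ?_
    · rintro x ⟨z, rfl⟩
      exact ⟨phiMap ends e e' hne hsame 1 z, hcphi 0 z⟩
    · rintro y ⟨z, rfl⟩
      exact ⟨psiMap ends e 1 z, hcpsi 0 z⟩
    · exact hpp 0
    · intro x
      refine ⟨-(hMap ends e e' 0 x), ?_⟩
      have h := LinearMap.congr_fun (homotopy0 ends e e' hne hsame) x
      simp only [LinearMap.comp_apply, LinearMap.sub_apply, LinearMap.id_apply] at h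
      rw [map_neg, h]
      abel
  · intro i
    have hkerphi : ∀ x ∈ LinearMap.ker (bdry ends i),
        phiMap ends e e' hne hsame (i + 1) x ∈
          LinearMap.ker (bdry (fun f : {f : E // f ≠ e} => ends f.1) i) := by
      intro x hx
      rw [LinearMap.mem_ker] at hx ⊢
      rw [hcphi i x, hx, map_zero]
    have hkerpsi : ∀ y ∈ LinearMap.ker (bdry (fun f : {f : E // f ≠ e} => ends f.1) i),
        psiMap ends e (i + 1) y ∈ LinearMap.ker (bdry ends i) := by
      intro y hy
      rw [LinearMap.mem_ker] at hy ⊢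
      rw [hcpsi i y, hy, map_zero]
    refine quotEquivOfMaps _ _
      ((phiMap ends e e' hne hsame (i + 1)).restrict hkerphi)
      ((psiMap ends e (i + 1)).restrict hkerpsi) ?_ ?_ ?_ ?_
    · rintro x hx
      rw [Submodule.mem_comap] at hx ⊢
      obtain ⟨z, hz⟩ := hx
      refine ⟨phiMap ends e e' hne hsame (i + 2) z, ?_⟩
      rw [hcphi (i + 1) z, hz]
      rfl
    · rintro y hy
      rw [Submodule.mem_comap] at hy ⊢
      obtain ⟨z, hz⟩ := hy
      refine ⟨psiMap ends e (i + 2) z, ?_⟩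
      rw [hcpsi (i + 1) z, hz]
      rfl
    · intro y
      apply Subtype.ext
      simp only [LinearMap.restrict_apply]
      exact hpp (i + 1) y.1
    · intro x
      rw [Submodule.mem_comap]
      have h := LinearMap.congr_fun (homotopy ends e e' hne hsame i) x.1
      simp only [LinearMap.comp_apply, LinearMap.add_apply, LinearMap.sub_apply,
        LinearMap.id_apply] at h
      have hx0 : bdry ends i x.1 = 0 := x.2
      rw [hx0, map_zero, add_zero] at h
      refine ⟨-(hMap ends e e' (i + 1) x.1), ?_⟩
      show bdry ends (i + 1) (-(hMap ends e e' (i + 1) x.1)) =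
        psiMap ends e (i + 1) (phiMap ends e e' hne hsame (i + 1) x.1) - x.1
      rw [map_neg, h]
      abel

end
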